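/- (Pasting of Frobenius comparison maps along composable morphisms.) Let E and F be categories with pullbacks, and let f_! ⊣ f^* be an adjunction with f^* : E ⥤ F preserving pullbacks. Let u : A ⟶ B and v : B ⟶ C be morphisms of E. Suppose that for every object X of F and every morphism x : X ⟶ f^*(C) the comparison map θ_{X,v,x} is an isomorphism, and that for every object X' of F and every morphism x' : X' ⟶ f^*(B) the comparison map θ_{X',u,x'} is an isomorphism. Then for every object X of F and every morphism x : X ⟶ f^*(C), the comparison map θ_{X,u≫v,x} associated to the composite u ≫ v : A ⟶ C is an isomorphism. -/

import Mathlib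

open CategoryTheory CategoryTheory.Limits

/-- A subobject classifier for a category `C` with a terminal object:
an object `Ω` together with a "truth" arrow `⊤_ C ⟶ Ω` such that every
monomorphism arises as the pullback of `truth` along a unique classifying map. -/
structure Classifier (C : Type*) [Category C] [HasTerminal C] where
  Ω : C
  truth : ⊤_ C ⟶ Ω
  χ : ∀ {U A : C} (m : U ⟶ A) [Mono m], A ⟶ Ω
  isPullback : ∀ {U A : C} (m : U ⟶ A) [Mono m],
    IsPullback m (terminal.from U) (χ m) truth
  uniq : ∀ {U A : C} (m : U ⟶ A) [Mono m] (χ' : A ⟶ Ω),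
    IsPullback m (terminal.from U) χ' truth → χ' = χ m

/-- `C` has a subobject classifier. -/
class HasClassifier (C : Type*) [Category C] [HasTerminal C] : Prop where
  nonempty : Nonempty (_root_.Classifier C)

/-- Given an adjunction `fShriek ⊣ fStar` (thought of as `f_! ⊣ f^*` for an essential
geometric morphism `f`), a morphism `a : A ⟶ B` in the codomain, an object `X` of the
domain and a morphism `x : X ⟶ f^* B`, this is the comparison map
`θ : f_!(X ×_{f^* B} f^* A) ⟶ f_!(X) ×_B A`, whose first component is `f_!` of the first
pullback projection, and whose second component is `f_!` of the second pullback projection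
followed by the counit `f_!(f^* A) ⟶ A`.  Here `f_!(X) ⟶ B` is the adjunct of `x`.
The geometric morphism `f` is locally connected precisely if all these maps are
isomorphisms. -/
noncomputable def thetaMap {F : Type*} {E : Type*} [Category F] [Category E]
    [HasPullbacks E] [HasPullbacks F]
    (fShriek : F ⥤ E) (fStar : E ⥤ F) (adj : fShriek ⊣ fStar)
    {A B : E} (a : A ⟶ B) (X : F) (x : X ⟶ fStar.obj B) :
    fShriek.obj (pullback x (fStar.map a)) ⟶ pullback ((adj.homEquiv X B).symm x) a :=
  pullback.lift (fShriek.map (pullback.fst x (fStar.map a)))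
    (fShriek.map (pullback.snd x (fStar.map a)) ≫ adj.counit.app A)
    (by
      have h := adj.counit.naturality a
      simp only [Functor.comp_map, Functor.id_map] at h
      rw [Adjunction.homEquiv_counit, ← Functor.map_comp_assoc, pullback.condition,
        Functor.map_comp_assoc, Category.assoc, ← h])

universe v₁ v₂ u₁ u₂

/-- Pasting of Frobenius comparison maps along composable morphisms.
Let `E` and `F` have pullbacks and let `f_! ⊣ f^*` be an adjunction with `f^* : E ⥤ F`
preserving pullbacks.  If all comparison maps `θ` for `v : B ⟶ C` are isomorphisms, and
all comparison maps `θ` for `u : A ⟶ B` are isomorphisms, then all comparison maps `θ`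
for the composite `u ≫ v : A ⟶ C` are isomorphisms. -/
lemma thetaMap_isIso_iff_isPullback {F : Type*} {E : Type*} [Category F] [Category E]
    [HasPullbacks E] [HasPullbacks F]
    (fShriek : F ⥤ E) (fStar : E ⥤ F) (adj : fShriek ⊣ fStar)
    {A B : E} (a : A ⟶ B) (X : F) (x : X ⟶ fStar.obj B) :
    IsIso (thetaMap fShriek fStar adj a X x) ↔
      IsPullback (fShriek.map (pullback.fst x (fStar.map a)))
        (fShriek.map (pullback.snd x (fStar.map a)) ≫ adj.counit.app A)
        ((adj.homEquiv X B).symm x) a := by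
  have w₁ : thetaMap fShriek fStar adj a X x ≫ pullback.fst _ _ =
      fShriek.map (pullback.fst x (fStar.map a)) := pullback.lift_fst _ _ _
  have w₂ : thetaMap fShriek fStar adj a X x ≫ pullback.snd _ _ =
      fShriek.map (pullback.snd x (fStar.map a)) ≫ adj.counit.app A := pullback.lift_snd _ _ _
  constructor
  · intro h
    refine IsPullback.of_iso_pullback ⟨?_⟩ (asIso (thetaMap fShriek fStar adj a X x)) w₁ w₂
    rw [← w₁, ← w₂, Category.assoc, Category.assoc, pullback.condition]
  · intro h
    have : thetaMap fShriek fStar adj a X x = h.isoPullback.hom := by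
      apply pullback.hom_ext <;> simp [w₁, w₂]
    rw [this]
    infer_instance

theorem theta_isIso_comp
    {E : Type u₁} [Category.{v₁} E] [HasPullbacks E]
    {F : Type u₂} [Category.{v₂} F] [HasPullbacks F]
    (fShriek : F ⥤ E) (fStar : E ⥤ F)
    [PreservesLimitsOfShape WalkingCospan fStar]
    (adj : fShriek ⊣ fStar)
    {A B C : E} (u : A ⟶ B) (v : B ⟶ C)
    (hv : ∀ (X : F) (x : X ⟶ fStar.obj C), IsIso (thetaMap fShriek fStar adj v X x))
    (hu : ∀ (X' : F) (x' : X' ⟶ fStar.obj B), IsIso (thetaMap fShriek fStar adj u X' x'))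
    (X : F) (x : X ⟶ fStar.obj C) :
    IsIso (thetaMap fShriek fStar adj (u ≫ v) X x) := by
  rw [thetaMap_isIso_iff_isPullback]
  -- notation
  set p1 := pullback.fst x (fStar.map v)
  set p2 := pullback.snd x (fStar.map v)
  set q1 := pullback.fst p2 (fStar.map u)
  set q2 := pullback.snd p2 (fStar.map u)
  -- the two small pullback squares in E
  have sv : IsPullback (fShriek.map p1) (fShriek.map p2 ≫ adj.counit.app B)
      ((adj.homEquiv X C).symm x) v :=
    (thetaMap_isIso_iff_isPullback fShriek fStar adj v X x).mp (hv X x)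
  have su : IsPullback (fShriek.map q1) (fShriek.map q2 ≫ adj.counit.app A)
      ((adj.homEquiv _ B).symm p2) u :=
    (thetaMap_isIso_iff_isPullback fShriek fStar adj u _ p2).mp (hu _ p2)
  rw [Adjunction.homEquiv_counit] at su
  -- paste in E
  have big : IsPullback (fShriek.map q1 ≫ fShriek.map p1)
      (fShriek.map q2 ≫ adj.counit.app A) ((adj.homEquiv X C).symm x) (u ≫ v) :=
    su.paste_horiz sv
  -- paste in F to identify the iterated pullback with the pullback along the composite
  have bigF : IsPullback (q1 ≫ p1) q2 x (fStar.map (u ≫ v)) := by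
    rw [Functor.map_comp]
    exact (IsPullback.of_hasPullback p2 (fStar.map u)).paste_horiz
      (IsPullback.of_hasPullback x (fStar.map v))
  set e := bigF.isoPullback with he
  have e1 : pullback.fst x (fStar.map (u ≫ v)) = e.inv ≫ q1 ≫ p1 := by
    rw [Iso.eq_inv_comp]; simp [he]
  have e2 : pullback.snd x (fStar.map (u ≫ v)) = e.inv ≫ q2 := by
    rw [Iso.eq_inv_comp]; simp [he]
  rw [e1, e2]
  exact IsPullback.of_iso_pullback
    ⟨by simp only [Functor.map_comp, Category.assoc]
        congr 1
        simpa using big.w⟩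
    (fShriek.mapIso e.symm ≪≫ big.isoPullback)
    (by simp [Functor.map_comp]) (by simp [Functor.map_comp])
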